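/- Let a and b be distinct, relatively prime integers greater than 1, let S = {ai + bj : i, j ∈ ℕ}, and let F = ab - a - b. For every integer n with 0 ≤ n ≤ F, exactly one of n and F - n lies in S. In particular the numerical semigroup S is symmetric. -/

import Mathlib

lemma aux_rep (a b : ℤ) (ha : 0 < a) (hb : 0 < b) (hcop : IsCoprime a b)
    (n i j : ℤ) (hi0 : 0 ≤ i) (hib : i < b) (hn : n = a * i + b * j) :
    (∃ u v : ℤ, 0 ≤ u ∧ 0 ≤ v ∧ n = a * u + b * v) ↔ 0 ≤ j := by
  constructor
  · rintro ⟨u, v, hu, hv, huv⟩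
    by_contra hj
    push_neg at hj
    have key : a * (i - u) = b * (v - j) := by linear_combination huv - hn
    have hdvd : b ∣ i - u := IsCoprime.dvd_of_dvd_mul_left hcop.symm ⟨v - j, key⟩
    have hpos : 0 < v - j := by linarith
    have h2 : 0 < b * (v - j) := mul_pos hb hpos
    have h3 : 0 < a * (i - u) := key ▸ h2
    have h4 : 0 < i - u := by nlinarith
    have h5 : b ≤ i - u := Int.le_of_dvd h4 hdvd
    linarith
  · intro hj
    exact ⟨i, j, hi0, hj, hn⟩

lemma int_xor (a b : ℤ) (ha : 0 < a) (hb : 0 < b) (hcop : IsCoprime a b) (n : ℤ) :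
    Xor' (∃ u v : ℤ, 0 ≤ u ∧ 0 ≤ v ∧ n = a * u + b * v)
      (∃ u v : ℤ, 0 ≤ u ∧ 0 ≤ v ∧ a * b - a - b - n = a * u + b * v) := by
  obtain ⟨x, y, hxy⟩ := hcop
  set i := n * x % b with hi
  have hi0 : 0 ≤ i := Int.emod_nonneg _ hb.ne'
  have hib : i < b := Int.emod_lt_of_pos _ hb
  set q := n * x / b with hq
  have hiq : i = n * x - b * q := by rw [hi, hq, Int.emod_def]
  set j := y * n + a * q with hj
  have hn : n = a * i + b * j := by rw [hiq, hj]; linear_combination (-n) * hxy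
  have h1 := aux_rep a b ha hb ⟨x, y, hxy⟩ n i j hi0 hib hn
  have hn2 : a * b - a - b - n = a * (b - 1 - i) + b * (-1 - j) := by
    linear_combination -hn
  have h2 := aux_rep a b ha hb ⟨x, y, hxy⟩ _ (b - 1 - i) (-1 - j)
    (by linarith) (by linarith) hn2
  rw [h1, h2]
  simp only [Xor', Xor]
  omega

lemma nat_iff (a b m : ℕ) : (∃ i j : ℕ, m = a * i + b * j) ↔
    ∃ u v : ℤ, 0 ≤ u ∧ 0 ≤ v ∧ (m : ℤ) = a * u + b * v := by
  constructor
  · rintro ⟨i, j, h⟩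
    exact ⟨i, j, by positivity, by positivity, by exact_mod_cast h⟩
  · rintro ⟨u, v, hu, hv, h⟩
    refine ⟨u.toNat, v.toNat, ?_⟩
    have h' : (m : ℤ) = a * u.toNat + b * v.toNat := by
      rw [Int.toNat_of_nonneg hu, Int.toNat_of_nonneg hv]; exact h
    exact_mod_cast h'

theorem stmt_6 (a b : ℕ) (ha : 2 ≤ a) (hb : 2 ≤ b) (hab : a ≠ b) (hcop : Nat.Coprime a b)
    (n : ℕ) (hn : n ≤ a * b - a - b) :
    Xor' (∃ i j : ℕ, n = a * i + b * j)
      (∃ i j : ℕ, a * b - a - b - n = a * i + b * j) := by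
  have hab' : a + b ≤ a * b := by nlinarith
  have hc : ((a * b - a - b - n : ℕ) : ℤ) = (a : ℤ) * b - a - b - n := by
    rw [← Nat.cast_mul]
    omega
  rw [nat_iff, nat_iff, hc]
  exact int_xor a b (by exact_mod_cast (by omega : 0 < a)) (by exact_mod_cast (by omega : 0 < b))
    (by exact_mod_cast hcop.isCoprime) n
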